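/- Let R be a ring and S a multiplicative subset of R generated by normal elements; set 𝔞 := { r ∈ R | srt = 0 for some s, t ∈ S } (an ideal of R with 𝔞 ≠ R), let π : R → R̄ := R/𝔞 and S̄ := π(S), so that S̄ is a (left and right) denominator set of R̄ with ass(S̄) = 0 and R⟨S⁻¹⟩ ≅ S̄⁻¹R̄. Assume the set min(𝔞) of primes of R minimal over 𝔞 is finite. Then: (1) the map min(𝔞) → Spec(S̄⁻¹R̄), 𝔭 ↦ S̄⁻¹π(𝔭), is an injection (each S̄⁻¹π(𝔭) is a prime ideal of S̄⁻¹R̄), and the prime radical satisfies 𝔫_{S̄⁻¹R̄} ⊆ S̄⁻¹𝔫_{R̄}; (2) writing π̃ : R̄ → R̃ := R̄/𝔫_{R̄} and S̃ := π̃(S̄), the set S̃ is a (left and right) denominator set of R̃ with ass(S̃) = 0, S̄⁻¹R̄ / S̄⁻¹𝔫_{R̄} ≅ S̃⁻¹R̃, and the map min(𝔞) → min(S̃⁻¹R̃), 𝔭 ↦ S̃⁻¹π̃(π(𝔭)), is a bijection. -/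

import Mathlib

/- Common framework: two-sided ideals, prime ideals, denominator sets and
   left localizations of (possibly noncommutative) rings, described
   axiomatically via their characteristic properties. -/

namespace BavulaMinPrimes

/-- A subset of a ring is a two-sided ideal. -/
def IsIdealSet {R : Type*} [Ring R] (I : Set R) : Prop :=
  (0 : R) ∈ I ∧ (∀ a ∈ I, ∀ b ∈ I, a + b ∈ I) ∧ (∀ a ∈ I, -a ∈ I) ∧
    ∀ a ∈ I, ∀ r : R, r * a ∈ I ∧ a * r ∈ I

/-- A (two-sided) prime ideal: a proper ideal `P` such that `A * B ⊆ P`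
implies `A ⊆ P` or `B ⊆ P` for all ideals `A`, `B`. -/
def IsPrimeIdealSet {R : Type*} [Ring R] (P : Set R) : Prop :=
  IsIdealSet P ∧ P ≠ Set.univ ∧
    ∀ A B : Set R, IsIdealSet A → IsIdealSet B →
      (∀ a ∈ A, ∀ b ∈ B, a * b ∈ P) → A ⊆ P ∨ B ⊆ P

/-- A completely prime ideal: the factor ring is a domain. -/
def IsCompletelyPrimeIdealSet {R : Type*} [Ring R] (P : Set R) : Prop :=
  IsIdealSet P ∧ P ≠ Set.univ ∧ ∀ a b : R, a * b ∈ P → a ∈ P ∨ b ∈ P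

/-- A minimal prime ideal of a ring. -/
def IsMinimalPrimeIdealSet {R : Type*} [Ring R] (P : Set R) : Prop :=
  IsPrimeIdealSet P ∧ ∀ P' : Set R, IsPrimeIdealSet P' → P' ⊆ P → P' = P

/-- A prime minimal over an ideal `A`. -/
def IsMinimalPrimeOver {R : Type*} [Ring R] (A P : Set R) : Prop :=
  IsPrimeIdealSet P ∧ A ⊆ P ∧
    ∀ P' : Set R, IsPrimeIdealSet P' → A ⊆ P' → P' ⊆ P → P' = P

/-- The set `min(R)` of minimal primes of `R`. -/
def minPrimes (R : Type*) [Ring R] : Set (Set R) := { P | IsMinimalPrimeIdealSet P }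

/-- The prime radical: intersection of all prime ideals. -/
def primeRadicalSet (R : Type*) [Ring R] : Set R :=
  { r : R | ∀ P : Set R, IsPrimeIdealSet P → r ∈ P }

/-- A ring is semiprime if its prime radical is zero. -/
def IsSemiprimeRing (R : Type*) [Ring R] : Prop := primeRadicalSet R = {0}

/-- A ring is prime if its zero ideal is a prime ideal. -/
def IsPrimeRing (R : Type*) [Ring R] : Prop := IsPrimeIdealSet ({0} : Set R)

/-- A multiplicative subset: `1 ∈ S`, `0 ∉ S`, closed under multiplication. -/
def IsMulSet {R : Type*} [Ring R] (S : Set R) : Prop :=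
  (1 : R) ∈ S ∧ (0 : R) ∉ S ∧ ∀ s ∈ S, ∀ t ∈ S, s * t ∈ S

/-- The left Ore condition: `S r ∩ R s ≠ ∅`. -/
def LeftOre {R : Type*} [Ring R] (S : Set R) : Prop :=
  ∀ r : R, ∀ s ∈ S, ∃ s' ∈ S, ∃ r' : R, s' * r = r' * s

/-- The right Ore condition: `r S ∩ s R ≠ ∅`. -/
def RightOre {R : Type*} [Ring R] (S : Set R) : Prop :=
  ∀ r : R, ∀ s ∈ S, ∃ s' ∈ S, ∃ r' : R, r * s' = s * r'

/-- A left denominator set: a left Ore multiplicative set such that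
`r s = 0` (with `s ∈ S`) implies `t r = 0` for some `t ∈ S`. -/
def IsLeftDenominatorSet {R : Type*} [Ring R] (S : Set R) : Prop :=
  IsMulSet S ∧ LeftOre S ∧ ∀ r : R, ∀ s ∈ S, r * s = 0 → ∃ t ∈ S, t * r = 0

/-- A right denominator set. -/
def IsRightDenominatorSet {R : Type*} [Ring R] (S : Set R) : Prop :=
  IsMulSet S ∧ RightOre S ∧ ∀ r : R, ∀ s ∈ S, s * r = 0 → ∃ t ∈ S, r * t = 0

/-- `ass_l(S) = { r | s r = 0 for some s ∈ S }`. -/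
def lAss {R : Type*} [Ring R] (S : Set R) : Set R := { r : R | ∃ s ∈ S, s * r = 0 }

/-- `f : R →+* Q` realizes `Q` as the left localization `S⁻¹R`:
elements of `S` become units, every element of `Q` is a left fraction
`(f s)⁻¹ (f r)`, and the kernel of `f` is `ass_l(S)`.  These properties
characterize `S⁻¹R` up to a unique `R`-isomorphism. -/
structure IsLeftLocalization {R Q : Type*} [Ring R] [Ring Q]
    (S : Set R) (f : R →+* Q) : Prop where
  isUnit : ∀ s ∈ S, IsUnit (f s)
  surj : ∀ q : Q, ∃ s ∈ S, ∃ r : R, f s * q = f r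
  ker : ∀ r : R, f r = 0 ↔ r ∈ lAss S

/-- `S⁻¹I = { s⁻¹ a | s ∈ S, a ∈ I }` as a subset of the localization `Q`:
`q ∈ S⁻¹I` iff `f s * q = f a` for some `s ∈ S`, `a ∈ I`. -/
def locSet {R Q : Type*} [Ring R] [Ring Q] (f : R →+* Q) (S : Set R)
    (I : Set R) : Set Q :=
  { q : Q | ∃ s ∈ S, ∃ a ∈ I, f s * q = f a }

/-- A normal element: `R n = n R`. -/
def IsNormalElement {R : Type*} [Ring R] (n : R) : Prop :=
  (∀ r : R, ∃ r' : R, r * n = n * r') ∧ ∀ r : R, ∃ r' : R, n * r = r' * n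

/-- A prime rich ring: every ideal contains a finite product of prime ideals
containing it (the empty product being the whole ring). -/
def IsPrimeRich (R : Type*) [Ring R] : Prop :=
  ∀ A : Set R, IsIdealSet A →
    ∃ (n : ℕ) (P : Fin n → Set R),
      (∀ i, IsPrimeIdealSet (P i) ∧ A ⊆ P i) ∧
      ∀ x : Fin n → R, (∀ i, x i ∈ P i) → (List.ofFn x).prod ∈ A

/-- An ideal which is finitely generated as a right `R`-module. -/
def IsFGRightIdeal {R : Type*} [Ring R] (I : Set R) : Prop :=
  ∃ (m : ℕ) (g : Fin m → R), (∀ i, g i ∈ I) ∧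
    ∀ x ∈ I, ∃ c : Fin m → R, x = ∑ i, g i * c i

/-- `𝔞 = { r ∈ R | s r t = 0 for some s, t ∈ S }`. -/
def twoSidedAss {R : Type*} [Ring R] (S : Set R) : Set R :=
  { r : R | ∃ s ∈ S, ∃ t ∈ S, s * r * t = 0 }

/-! ### Auxiliary lemmas: basic two-sided ideal theory -/

section BasicIdeals

variable {R : Type*} [Ring R]

theorem IsIdealSet.zero_mem {I : Set R} (h : IsIdealSet I) : (0 : R) ∈ I := h.1

theorem IsIdealSet.add_mem {I : Set R} (h : IsIdealSet I) {a b : R} (ha : a ∈ I) (hb : b ∈ I) :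
    a + b ∈ I := h.2.1 a ha b hb

theorem IsIdealSet.neg_mem {I : Set R} (h : IsIdealSet I) {a : R} (ha : a ∈ I) : -a ∈ I :=
  h.2.2.1 a ha

theorem IsIdealSet.mul_left {I : Set R} (h : IsIdealSet I) {a : R} (ha : a ∈ I) (r : R) :
    r * a ∈ I := (h.2.2.2 a ha r).1

theorem IsIdealSet.mul_right {I : Set R} (h : IsIdealSet I) {a : R} (ha : a ∈ I) (r : R) :
    a * r ∈ I := (h.2.2.2 a ha r).2

theorem IsIdealSet.sub_mem {I : Set R} (h : IsIdealSet I) {a b : R} (ha : a ∈ I) (hb : b ∈ I) :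
    a - b ∈ I := by
  rw [sub_eq_add_neg]; exact h.add_mem ha (h.neg_mem hb)

theorem IsIdealSet.eq_univ {I : Set R} (h : IsIdealSet I) (h1 : (1 : R) ∈ I) :
    I = Set.univ := by
  ext x
  simp only [Set.mem_univ, iff_true]
  simpa using h.mul_left h1 x

theorem IsPrimeIdealSet.one_not_mem {P : Set R} (hP : IsPrimeIdealSet P) : (1 : R) ∉ P :=
  fun h1 => hP.2.1 (hP.1.eq_univ h1)

theorem isIdealSet_sInter {C : Set (Set R)} (hne : C.Nonempty)
    (h : ∀ I ∈ C, IsIdealSet I) : IsIdealSet (⋂₀ C) := by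
  refine ⟨fun I hI => (h I hI).zero_mem, fun a ha b hb I hI => (h I hI).add_mem (ha I hI) (hb I hI),
    fun a ha I hI => (h I hI).neg_mem (ha I hI),
    fun a ha r => ⟨fun I hI => (h I hI).mul_left (ha I hI) r,
      fun I hI => (h I hI).mul_right (ha I hI) r⟩⟩

/-- Sum of two ideal sets. -/
def addSet (X Y : Set R) : Set R := { z | ∃ x ∈ X, ∃ y ∈ Y, z = x + y }

theorem isIdealSet_addSet {X Y : Set R} (hX : IsIdealSet X) (hY : IsIdealSet Y) :
    IsIdealSet (addSet X Y) := by
  refine ⟨⟨0, hX.zero_mem, 0, hY.zero_mem, by abel⟩, ?_, ?_, ?_⟩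
  · rintro _ ⟨x, hx, y, hy, rfl⟩ _ ⟨x', hx', y', hy', rfl⟩
    exact ⟨x + x', hX.add_mem hx hx', y + y', hY.add_mem hy hy', by abel⟩
  · rintro _ ⟨x, hx, y, hy, rfl⟩
    exact ⟨-x, hX.neg_mem hx, -y, hY.neg_mem hy, by abel⟩
  · rintro _ ⟨x, hx, y, hy, rfl⟩ r
    exact ⟨⟨r * x, hX.mul_left hx r, r * y, hY.mul_left hy r, by rw [mul_add]⟩,
      ⟨x * r, hX.mul_right hx r, y * r, hY.mul_right hy r, by rw [add_mul]⟩⟩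

theorem left_mem_addSet {X Y : Set R} (hY : IsIdealSet Y) {x : R} (hx : x ∈ X) :
    x ∈ addSet X Y := ⟨x, hx, 0, hY.zero_mem, by abel⟩

theorem right_mem_addSet {X Y : Set R} (hX : IsIdealSet X) {y : R} (hy : y ∈ Y) :
    y ∈ addSet X Y := ⟨0, hX.zero_mem, y, hy, by abel⟩

/-- The two-sided ideal generated by an element (of a unital ring). -/
def genIdeal (x : R) : Set R :=
  { z | ∃ l : List (R × R), z = (l.map fun p => p.1 * x * p.2).sum }

theorem self_mem_genIdeal (x : R) : x ∈ genIdeal x :=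
  ⟨[(1, 1)], by simp⟩

private theorem sum_conj (x c d : R) (l : List (R × R)) :
    ((l.map fun p => (c * p.1, p.2 * d)).map fun p => p.1 * x * p.2).sum
      = c * (l.map fun p => p.1 * x * p.2).sum * d := by
  induction l with
  | nil => simp
  | cons hd tl ih =>
    simp only [List.map_cons, List.sum_cons, ih]
    noncomm_ring

theorem isIdealSet_genIdeal (x : R) : IsIdealSet (genIdeal x) := by
  refine ⟨⟨[], by simp⟩, ?_, ?_, ?_⟩
  · rintro _ ⟨l, rfl⟩ _ ⟨l', rfl⟩
    exact ⟨l ++ l', by simp⟩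
  · rintro _ ⟨l, rfl⟩
    refine ⟨l.map fun p => ((-1) * p.1, p.2 * 1), ?_⟩
    rw [sum_conj]
    noncomm_ring
  · rintro _ ⟨l, rfl⟩ r
    constructor
    · exact ⟨l.map fun p => (r * p.1, p.2 * 1), by rw [sum_conj]; noncomm_ring⟩
    · exact ⟨l.map fun p => (1 * p.1, p.2 * r), by rw [sum_conj]; noncomm_ring⟩

/-- The element criterion for prime ideals: if `x R y ⊆ P` then `x ∈ P` or `y ∈ P`. -/
theorem IsPrimeIdealSet.elem_criterion {P : Set R} (hP : IsPrimeIdealSet P) {x y : R}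
    (h : ∀ r : R, x * r * y ∈ P) : x ∈ P ∨ y ∈ P := by
  have h1 : ∀ (c e : R) (l' : List (R × R)),
      c * x * e * ((l'.map fun p => p.1 * y * p.2).sum) ∈ P := by
    intro c e l'
    induction l' with
    | nil => simpa using hP.1.zero_mem
    | cons hd' tl' ih' =>
      simp only [List.map_cons, List.sum_cons, mul_add]
      refine hP.1.add_mem ?_ ih'
      have heq : c * x * e * (hd'.1 * y * hd'.2) = c * (x * (e * hd'.1) * y) * hd'.2 := by
        simp [mul_assoc]
      rw [heq]
      exact hP.1.mul_right (hP.1.mul_left (h _) _) _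
  have key : ∀ a ∈ genIdeal x, ∀ b ∈ genIdeal y, a * b ∈ P := by
    rintro _ ⟨l, rfl⟩ _ ⟨l', rfl⟩
    induction l with
    | nil => simpa using hP.1.zero_mem
    | cons hd tl ih =>
      simp only [List.map_cons, List.sum_cons, add_mul]
      exact hP.1.add_mem (h1 hd.1 hd.2 l') ih
  rcases hP.2.2 _ _ (isIdealSet_genIdeal x) (isIdealSet_genIdeal y) key with h' | h'
  · exact Or.inl (h' (self_mem_genIdeal x))
  · exact Or.inr (h' (self_mem_genIdeal y))

theorem IsPrimeIdealSet.compl_msystem {P : Set R} (hP : IsPrimeIdealSet P) {x y : R}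
    (hx : x ∉ P) (hy : y ∉ P) : ∃ r, x * r * y ∉ P := by
  by_contra hc
  push_neg at hc
  rcases hP.elem_criterion hc with h | h
  · exact hx h
  · exact hy h

end BasicIdeals

/-! ### Correspondence of ideals and primes under surjective ring homs, Zorn arguments -/

section Correspondence

variable {R : Type*} {A : Type*} [Ring R] [Ring A]

theorem preimage_ideal (f : R →+* A) {J : Set A} (hJ : IsIdealSet J) :
    IsIdealSet (f ⁻¹' J) := by
  refine ⟨?_, ?_, ?_, ?_⟩
  · simp only [Set.mem_preimage, map_zero]; exact hJ.zero_mem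
  · intro a ha b hb; simp only [Set.mem_preimage, map_add]; exact hJ.add_mem ha hb
  · intro a ha; simp only [Set.mem_preimage, map_neg]; exact hJ.neg_mem ha
  · intro a ha r
    constructor
    · simp only [Set.mem_preimage, map_mul]; exact hJ.mul_left ha _
    · simp only [Set.mem_preimage, map_mul]; exact hJ.mul_right ha _

theorem image_ideal (f : R →+* A) (hf : Function.Surjective f) {I : Set R}
    (hI : IsIdealSet I) : IsIdealSet (f '' I) := by
  refine ⟨⟨0, hI.zero_mem, map_zero f⟩, ?_, ?_, ?_⟩
  · rintro _ ⟨a, ha, rfl⟩ _ ⟨b, hb, rfl⟩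
    exact ⟨a + b, hI.add_mem ha hb, map_add f a b⟩
  · rintro _ ⟨a, ha, rfl⟩
    exact ⟨-a, hI.neg_mem ha, map_neg f a⟩
  · rintro _ ⟨a, ha, rfl⟩ r
    obtain ⟨r₀, rfl⟩ := hf r
    exact ⟨⟨r₀ * a, hI.mul_left ha r₀, map_mul f r₀ a⟩,
      ⟨a * r₀, hI.mul_right ha r₀, map_mul f a r₀⟩⟩

theorem preimage_image_eq (f : R →+* A) {I : Set R} (hI : IsIdealSet I)
    (hker : ∀ r : R, f r = 0 → r ∈ I) : f ⁻¹' (f '' I) = I := by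
  ext a
  simp only [Set.mem_preimage]
  constructor
  · rintro ⟨b, hb, hba⟩
    have : f (a - b) = 0 := by rw [map_sub, hba, sub_self]
    have := hI.add_mem (hker _ this) hb
    simpa using this
  · intro ha; exact ⟨a, ha, rfl⟩

theorem preimage_prime (f : R →+* A) (hf : Function.Surjective f) {P : Set A}
    (hP : IsPrimeIdealSet P) : IsPrimeIdealSet (f ⁻¹' P) := by
  refine ⟨preimage_ideal f hP.1, ?_, ?_⟩
  · intro h
    apply hP.one_not_mem
    have : (1 : R) ∈ f ⁻¹' P := h ▸ Set.mem_univ 1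
    simpa using this
  · intro X Y hX hY hXY
    have himg : ∀ a ∈ f '' X, ∀ b ∈ f '' Y, a * b ∈ P := by
      rintro _ ⟨a, ha, rfl⟩ _ ⟨b, hb, rfl⟩
      rw [← map_mul]
      exact hXY a ha b hb
    rcases hP.2.2 _ _ (image_ideal f hf hX) (image_ideal f hf hY) himg with h | h
    · exact Or.inl fun x hx => h ⟨x, hx, rfl⟩
    · exact Or.inr fun y hy => h ⟨y, hy, rfl⟩

theorem image_prime (f : R →+* A) (hf : Function.Surjective f) {P : Set R}
    (hP : IsPrimeIdealSet P) (hker : ∀ r : R, f r = 0 → r ∈ P) :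
    IsPrimeIdealSet (f '' P) := by
  have hpre : f ⁻¹' (f '' P) = P := preimage_image_eq f hP.1 hker
  refine ⟨image_ideal f hf hP.1, ?_, ?_⟩
  · intro h
    apply hP.one_not_mem
    have : (1 : R) ∈ f ⁻¹' (f '' P) := by rw [h]; simp
    rwa [hpre] at this
  · intro X Y hX hY hXY
    have hXY' : ∀ a ∈ f ⁻¹' X, ∀ b ∈ f ⁻¹' Y, a * b ∈ P := by
      intro a ha b hb
      rw [← hpre]
      simp only [Set.mem_preimage, map_mul]
      exact hXY _ ha _ hb
    rcases hP.2.2 _ _ (preimage_ideal f hX) (preimage_ideal f hY) hXY' with h | h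
    · refine Or.inl fun x hx => ?_
      obtain ⟨x₀, rfl⟩ := hf x
      exact ⟨x₀, h hx, rfl⟩
    · refine Or.inr fun y hy => ?_
      obtain ⟨y₀, rfl⟩ := hf y
      exact ⟨y₀, h hy, rfl⟩

/-- Pushing minimal primes over the kernel forward along a surjection. -/
theorem image_minimalPrimeOver (f : R →+* A) (hf : Function.Surjective f)
    (K : Set R) (hK : ∀ r : R, f r = 0 ↔ r ∈ K) {p : Set R}
    (hp : IsMinimalPrimeOver K p) : IsMinimalPrimeIdealSet (f '' p) := by
  have hkerp : ∀ r : R, f r = 0 → r ∈ p := fun r hr => hp.2.1 ((hK r).1 hr)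
  refine ⟨image_prime f hf hp.1 hkerp, ?_⟩
  intro P' hP' hsub
  have hpre' : IsPrimeIdealSet (f ⁻¹' P') := preimage_prime f hf hP'
  have hKsub : K ⊆ f ⁻¹' P' := by
    intro r hr
    have : f r = 0 := (hK r).2 hr
    simp only [Set.mem_preimage, this]
    exact hP'.1.zero_mem
  have hsub' : f ⁻¹' P' ⊆ p := by
    intro r hr
    have : f r ∈ f '' p := hsub hr
    rwa [← Set.mem_preimage, preimage_image_eq f hp.1.1 hkerp] at this
  have heq := hp.2.2 _ hpre' hKsub hsub'
  rw [← heq, Set.image_preimage_eq P' hf]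

/-- Pulling minimal primes back along a surjection with kernel `K`. -/
theorem preimage_minimalPrimeOver (f : R →+* A) (hf : Function.Surjective f)
    (K : Set R) (hK : ∀ r : R, f r = 0 ↔ r ∈ K) {P : Set A}
    (hP : IsMinimalPrimeIdealSet P) : IsMinimalPrimeOver K (f ⁻¹' P) := by
  refine ⟨preimage_prime f hf hP.1, ?_, ?_⟩
  · intro r hr
    simp only [Set.mem_preimage, (hK r).2 hr]
    exact hP.1.1.zero_mem
  · intro p' hp' hKp' hsub
    have hkerp' : ∀ r : R, f r = 0 → r ∈ p' := fun r hr => hKp' ((hK r).1 hr)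
    have himg : IsPrimeIdealSet (f '' p') := image_prime f hf hp' hkerp'
    have : f '' p' ⊆ P := by
      rintro _ ⟨x, hx, rfl⟩
      exact hsub hx
    have heq := hP.2 _ himg this
    rw [← heq, preimage_image_eq f hp'.1 hkerp']

/-- The intersection of a nonempty chain of primes is prime. -/
theorem chain_sInter_prime {C : Set (Set R)} (hC : IsChain (· ⊆ ·) C) (hne : C.Nonempty)
    (hpr : ∀ P ∈ C, IsPrimeIdealSet P) : IsPrimeIdealSet (⋂₀ C) := by
  obtain ⟨P₀, hP₀⟩ := hne
  refine ⟨isIdealSet_sInter ⟨P₀, hP₀⟩ fun I hI => (hpr I hI).1, ?_, ?_⟩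
  · intro h
    apply (hpr P₀ hP₀).one_not_mem
    have : (1 : R) ∈ ⋂₀ C := h ▸ Set.mem_univ 1
    exact this P₀ hP₀
  · intro X Y hX hY hXY
    by_cases hXC : X ⊆ ⋂₀ C
    · exact Or.inl hXC
    · refine Or.inr ?_
      obtain ⟨x, hxX, hxI⟩ := Set.not_subset.1 hXC
      simp only [Set.mem_sInter, not_forall] at hxI
      obtain ⟨Px, hPx, hxPx⟩ := hxI
      intro y hy P hP
      have hPP : ∀ P' ∈ C, ∀ a ∈ X, ∀ b ∈ Y, a * b ∈ P' :=
        fun P' hP' a ha b hb => hXY a ha b hb P' hP'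
      rcases (hpr P hP).2.2 X Y hX hY (hPP P hP) with h | h
      · -- X ⊆ P; then Px ⊆ P, and use primeness of Px
        have hPxP : Px ⊆ P := by
          rcases hC.total hP hPx with h' | h'
          · exact absurd (h' (h hxX)) hxPx
          · exact h'
        rcases (hpr Px hPx).2.2 X Y hX hY (hPP Px hPx) with h2 | h2
        · exact absurd (h2 hxX) hxPx
        · exact hPxP (h2 hy)
      · exact h hy

/-- Below every prime containing `K` there is a prime minimal over `K`. -/
theorem exists_minimalPrimeOver_le {K P : Set R} (hKP : K ⊆ P) (hP : IsPrimeIdealSet P) :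
    ∃ p, IsMinimalPrimeOver K p ∧ p ⊆ P := by
  have := zorn_superset_nonempty {q : Set R | IsPrimeIdealSet q ∧ K ⊆ q ∧ q ⊆ P} ?_ P ⟨hP, hKP, subset_rfl⟩
  · obtain ⟨m, hmP, hm⟩ := this
    obtain ⟨hmpr, hKm, hmP'⟩ := hm.prop
    refine ⟨m, ⟨hmpr, hKm, ?_⟩, hmP'⟩
    intro p' hp' hKp' hp'm
    exact (hm.eq_of_ge (y := p') ⟨hp', hKp', hp'm.trans hmP'⟩ hp'm).symm
  · intro c hcS hchain hcne
    refine ⟨⋂₀ c, ⟨chain_sInter_prime hchain hcne fun P hP => (hcS hP).1, ?_, ?_⟩,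
      fun s hs => Set.sInter_subset_of_mem hs⟩
    · exact fun r hr s hs => (hcS hs).2.1 hr
    · obtain ⟨s, hs⟩ := hcne
      exact (Set.sInter_subset_of_mem hs).trans (hcS hs).2.2

/-- Every nontrivial ring has a maximal (proper) ideal, and it is prime. -/
theorem exists_prime_ideal (hR : (0 : R) ≠ 1) : ∃ P : Set R, IsPrimeIdealSet P := by
  have hzero : ({0} : Set R) ∈ {I : Set R | IsIdealSet I ∧ (1 : R) ∉ I} := by
    constructor
    · exact ⟨rfl, by rintro _ rfl _ rfl; simp, by rintro _ rfl; simp, by rintro _ rfl r; simp⟩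
    · simp only [Set.mem_singleton_iff]
      exact fun h => hR h.symm
  have := zorn_subset_nonempty {I : Set R | IsIdealSet I ∧ (1 : R) ∉ I} ?_ {0} hzero
  · obtain ⟨M, -, hM⟩ := this
    obtain ⟨hMid, hM1⟩ := hM.prop
    refine ⟨M, hMid, fun hu => hM1 (hu ▸ Set.mem_univ 1), ?_⟩
    intro X Y hX hY hXY
    by_contra hcon
    push_neg at hcon
    obtain ⟨x, hxX, hxM⟩ := Set.not_subset.1 hcon.1
    obtain ⟨y, hyY, hyM⟩ := Set.not_subset.1 hcon.2
    have hXM : IsIdealSet (addSet X M) := isIdealSet_addSet hX hMid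
    have h1 : (1 : R) ∈ addSet X M := by
      by_contra h1
      have := hM.le_of_ge (y := addSet X M) ⟨hXM, h1⟩ (fun m hm => right_mem_addSet hX hm)
      exact hxM (this (left_mem_addSet hMid hxX))
    obtain ⟨x', hx', m, hm, h1eq⟩ := h1
    have : y = x' * y + m * y := by rw [← add_mul, ← h1eq, one_mul]
    apply hyM
    rw [this]
    exact hMid.add_mem (hXY x' hx' y hyY) (hMid.mul_right hm y)
  · intro c hcS hchain hcne
    obtain ⟨I₀, hI₀⟩ := hcne
    refine ⟨⋃₀ c, ⟨⟨⟨I₀, hI₀, (hcS hI₀).1.zero_mem⟩, ?_, ?_, ?_⟩, ?_⟩,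
      fun s hs => Set.subset_sUnion_of_mem hs⟩
    · rintro a ⟨I, hI, haI⟩ b ⟨J, hJ, hbJ⟩
      rcases hchain.total hI hJ with h | h
      · exact ⟨J, hJ, (hcS hJ).1.add_mem (h haI) hbJ⟩
      · exact ⟨I, hI, (hcS hI).1.add_mem haI (h hbJ)⟩
    · rintro a ⟨I, hI, haI⟩
      exact ⟨I, hI, (hcS hI).1.neg_mem haI⟩
    · rintro a ⟨I, hI, haI⟩ r
      exact ⟨⟨I, hI, (hcS hI).1.mul_left haI r⟩, ⟨I, hI, (hcS hI).1.mul_right haI r⟩⟩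
    · rintro ⟨I, hI, h1I⟩
      exact (hcS hI).2 h1I

theorem minimalPrimeOver_zero_iff {p : Set R} :
    IsMinimalPrimeOver ({0} : Set R) p ↔ IsMinimalPrimeIdealSet p := by
  constructor
  · rintro ⟨hp, -, hmin⟩
    exact ⟨hp, fun P' hP' hsub => hmin P' hP'
      (by rintro x rfl; exact hP'.1.zero_mem) hsub⟩
  · rintro ⟨hp, hmin⟩
    exact ⟨hp, by rintro x rfl; exact hp.1.zero_mem, fun P' hP' _ hsub => hmin P' hP' hsub⟩

theorem exists_minimal_prime (hR : (0 : R) ≠ 1) : ∃ P : Set R, IsMinimalPrimeIdealSet P := by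
  obtain ⟨P, hP⟩ := exists_prime_ideal hR
  obtain ⟨p, hp, -⟩ := exists_minimalPrimeOver_le (K := {0})
    (by intro x hx; rw [Set.mem_singleton_iff] at hx; rw [hx]; exact hP.1.zero_mem) hP
  exact ⟨p, minimalPrimeOver_zero_iff.1 hp⟩

/-- Every prime contains a minimal prime. -/
theorem exists_minimal_prime_le {P : Set R} (hP : IsPrimeIdealSet P) :
    ∃ p, IsMinimalPrimeIdealSet p ∧ p ⊆ P := by
  obtain ⟨p, hp, hsub⟩ := exists_minimalPrimeOver_le (K := ({0} : Set R))
    (by rintro x rfl; exact hP.1.zero_mem) hP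
  exact ⟨p, minimalPrimeOver_zero_iff.1 hp, hsub⟩

/-- The prime radical is the intersection of the minimal primes. -/
theorem primeRadical_eq_sInter_minimal :
    primeRadicalSet R = { r : R | ∀ p : Set R, IsMinimalPrimeIdealSet p → r ∈ p } := by
  ext r
  constructor
  · intro hr p hp
    exact hr p hp.1
  · intro hr P hP
    obtain ⟨p, hp, hsub⟩ := exists_minimal_prime_le hP
    exact hsub (hr p hp)

/-- A prime ideal absorbing all products over a list of ideals contains one of them. -/
theorem prime_absorb_list {P : Set R} (hP : IsPrimeIdealSet P) :
    ∀ L : List (Set R), (∀ I ∈ L, IsIdealSet I) →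
      (∀ x : List R, List.Forall₂ (· ∈ ·) x L → x.prod ∈ P) → ∃ I ∈ L, I ⊆ P := by
  intro L
  induction L with
  | nil =>
    intro _ hprod
    have : (1 : R) ∈ P := by simpa using hprod [] List.Forall₂.nil
    exact absurd this hP.one_not_mem
  | cons I L' ih =>
    intro hid hprod
    set Y : Set R := { y | ∀ q ∈ I, q * y ∈ P } with hYdef
    have hIid : IsIdealSet I := hid I (by simp)
    have hYid : IsIdealSet Y := by
      refine ⟨fun q hq => by simpa using hP.1.mul_left (hP.1.zero_mem) q, ?_, ?_, ?_⟩
      · intro a ha b hb q hq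
        rw [mul_add]
        exact hP.1.add_mem (ha q hq) (hb q hq)
      · intro a ha q hq
        rw [mul_neg]
        exact hP.1.neg_mem (ha q hq)
      · intro a ha r
        constructor
        · intro q hq
          rw [← mul_assoc]
          exact ha (q * r) (hIid.mul_right hq r)
        · intro q hq
          rw [← mul_assoc]
          exact hP.1.mul_right (ha q hq) r
    have hIY : ∀ a ∈ I, ∀ b ∈ Y, a * b ∈ P := fun a ha b hb => hb a ha
    rcases hP.2.2 I Y hIid hYid hIY with h | h
    · exact ⟨I, by simp, h⟩
    · have : ∀ x : List R, List.Forall₂ (· ∈ ·) x L' → x.prod ∈ P := by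
        intro x hx
        refine h ?_
        intro q hq
        have := hprod (q :: x) (List.Forall₂.cons hq hx)
        simpa using this
      obtain ⟨J, hJ, hJP⟩ := ih (fun J hJ => hid J (by simp [hJ])) this
      exact ⟨J, by simp [hJ], hJP⟩

theorem forall₂_exists_mem {α β : Type*} {r : α → β → Prop} :
    ∀ {x : List α} {L : List β}, List.Forall₂ r x L → ∀ b ∈ L, ∃ a ∈ x, r a b := by
  intro x L h
  induction h with
  | nil => intro b hb; simp at hb
  | @cons a b x' L' hr htail ih =>
    intro c hc
    rcases List.mem_cons.1 hc with rfl | hc'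
    · exact ⟨a, by simp, hr⟩
    · obtain ⟨a', ha', hab⟩ := ih c hc'
      exact ⟨a', by simp [ha'], hab⟩

theorem list_prod_mem_ideal {I : Set R} (hI : IsIdealSet I) :
    ∀ x : List R, (∃ a ∈ x, a ∈ I) → x.prod ∈ I := by
  intro x
  induction x with
  | nil => rintro ⟨a, ha, -⟩; simp at ha
  | cons hd tl ih =>
    rintro ⟨a, ha, haI⟩
    rw [List.prod_cons]
    rcases List.mem_cons.1 ha with rfl | hatl
    · exact hI.mul_right haI _
    · exact hI.mul_left (ih ⟨a, hatl, haI⟩) hd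

end Correspondence

/-! ### Normal elements, their automorphisms, and the key avoidance lemma -/

section Normal

variable {R : Type*} [Ring R]

theorem isNormal_image {A : Type*} [Ring A] (f : R →+* A) (hf : Function.Surjective f)
    {n : R} (hn : IsNormalElement n) : IsNormalElement (f n) := by
  constructor
  · intro b
    obtain ⟨r, rfl⟩ := hf b
    obtain ⟨r', hr'⟩ := hn.1 r
    exact ⟨f r', by rw [← map_mul, ← map_mul, hr']⟩
  · intro b
    obtain ⟨r, rfl⟩ := hf b
    obtain ⟨r', hr'⟩ := hn.2 r
    exact ⟨f r', by rw [← map_mul, ← map_mul, hr']⟩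

/-- For a (left and right) regular normal element `t`, there is a ring automorphism `σ`
with `a * t = t * σ a` for all `a`. -/
theorem exists_normal_conj {t : R} (hn : IsNormalElement t)
    (hregl : ∀ x : R, t * x = 0 → x = 0) (hregr : ∀ x : R, x * t = 0 → x = 0) :
    ∃ σ : R →+* R, Function.Bijective σ ∧ ∀ a : R, a * t = t * σ a := by
  have cancl : ∀ x y : R, t * x = t * y → x = y := by
    intro x y h
    have : t * (x - y) = 0 := by rw [mul_sub, h, sub_self]
    have := hregl _ this
    rwa [sub_eq_zero] at this
  have cancr : ∀ x y : R, x * t = y * t → x = y := by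
    intro x y h
    have : (x - y) * t = 0 := by rw [sub_mul, h, sub_self]
    have := hregr _ this
    rwa [sub_eq_zero] at this
  set σ : R → R := fun a => Classical.choose (hn.1 a) with hσdef
  have hσ : ∀ a : R, a * t = t * σ a := fun a => Classical.choose_spec (hn.1 a)
  set τ : R → R := fun a => Classical.choose (hn.2 a) with hτdef
  have hτ : ∀ a : R, t * a = τ a * t := fun a => Classical.choose_spec (hn.2 a)
  have hτσ : ∀ a : R, τ (σ a) = a := by
    intro a
    apply cancr
    rw [← hτ (σ a), ← hσ a]
  have hστ : ∀ a : R, σ (τ a) = a := by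
    intro a
    apply cancl
    rw [← hσ (τ a), ← hτ a]
  have hone : σ 1 = 1 := by
    apply cancl
    rw [← hσ 1, one_mul, mul_one]
  have hmul : ∀ a b : R, σ (a * b) = σ a * σ b := by
    intro a b
    apply cancl
    rw [← hσ (a * b), mul_assoc, hσ b, ← mul_assoc, hσ a, mul_assoc]
  have hadd : ∀ a b : R, σ (a + b) = σ a + σ b := by
    intro a b
    apply cancl
    rw [← hσ (a + b), mul_add, ← hσ a, ← hσ b, add_mul]
  have hzero : σ 0 = 0 := by
    apply cancl
    rw [← hσ 0, zero_mul, mul_zero]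
  refine ⟨⟨⟨⟨σ, hone⟩, hmul⟩, hzero, hadd⟩, ⟨?_, fun a => ⟨τ a, hστ a⟩⟩, hσ⟩
  intro a b hab
  have := congrArg τ hab
  simpa [hτσ] using this

theorem image_prime_of_auto {σ : R →+* R} (hσ : Function.Bijective σ) {P : Set R}
    (hP : IsPrimeIdealSet P) : IsPrimeIdealSet (σ '' P) :=
  image_prime σ hσ.2 hP fun r hr => by
    have : σ r = σ 0 := by rw [hr, map_zero]
    rw [hσ.1 this]
    exact hP.1.zero_mem

theorem image_minimal_prime_of_auto {σ : R →+* R} (hσ : Function.Bijective σ) {P : Set R}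
    (hP : IsMinimalPrimeIdealSet P) : IsMinimalPrimeIdealSet (σ '' P) := by
  refine ⟨image_prime_of_auto hσ hP.1, ?_⟩
  intro P' hP' hsub
  have hpre : IsPrimeIdealSet (σ ⁻¹' P') := preimage_prime σ hσ.2 hP'
  have hpre_sub : σ ⁻¹' P' ⊆ P := by
    intro x hx
    have : σ x ∈ σ '' P := hsub hx
    obtain ⟨y, hy, hxy⟩ := this
    rwa [← hσ.1 hxy]
  have heq := hP.2 _ hpre hpre_sub
  rw [← heq, Set.image_preimage_eq P' hσ.2]

/-- Iterates: `a * t^n = t^n * σ^[n] a`. -/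
theorem normal_conj_pow {t : R} {σ : R → R} (hσ : ∀ a : R, a * t = t * σ a) :
    ∀ (n : ℕ) (a : R), a * t ^ n = t ^ n * σ^[n] a := by
  intro n
  induction n with
  | zero => simp
  | succ n ih =>
    intro a
    rw [pow_succ, ← mul_assoc, ih a, mul_assoc, hσ _, ← mul_assoc, ← pow_succ,
      Function.iterate_succ_apply']

theorem pow_regular_left {t : R} (hregl : ∀ x : R, t * x = 0 → x = 0) :
    ∀ (n : ℕ) (x : R), t ^ n * x = 0 → x = 0 := by
  intro n
  induction n with
  | zero => intro x hx; simpa using hx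
  | succ k ih =>
    intro x hx
    rw [pow_succ, mul_assoc] at hx
    exact hregl _ (ih _ ((by rw [← mul_assoc]; rw [mul_assoc]; exact hx) : t ^ k * (t * x) = 0))

theorem pow_regular_right {t : R} (hregr : ∀ x : R, x * t = 0 → x = 0) :
    ∀ (n : ℕ) (x : R), x * t ^ n = 0 → x = 0 := by
  intro n
  induction n with
  | zero => intro x hx; simpa using hx
  | succ k ih =>
    intro x hx
    rw [pow_succ, ← mul_assoc] at hx
    exact ih _ (hregr _ hx)

/-- Key lemma, auxiliary form: a minimal prime stable under the conjugation
automorphism of a regular normal element `u` cannot contain `u`. -/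
theorem aux_not_mem_minimal_prime {u : R} {P : Set R} (hP : IsMinimalPrimeIdealSet P)
    (huP : u ∈ P) (hregl : ∀ x : R, u * x = 0 → x = 0)
    (ψ : R → R) (hψmul : ∀ x y : R, ψ (x * y) = ψ x * ψ y)
    (hψ : ∀ a : R, a * u = u * ψ a) (hψbij : Function.Bijective ψ)
    (hψP : ∀ a : R, ψ a ∈ P ↔ a ∈ P) : False := by
  classical
  -- the `m`-system
  set N : Set R := { x | ∃ (j : ℕ) (m : R), m ∉ P ∧ x = u ^ j * m } with hNdef
  have hψiterP : ∀ (i : ℕ) (a : R), ψ^[i] a ∈ P ↔ a ∈ P := by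
    intro i
    induction i with
    | zero => simp
    | succ i ih =>
      intro a
      rw [Function.iterate_succ_apply']
      rw [hψP]
      exact ih a
  have hone_not : (1 : R) ∉ P := hP.1.one_not_mem
  have h1N : (1 : R) ∈ N := ⟨0, 1, hone_not, by simp⟩
  have huN : u ∈ N := ⟨1, 1, hone_not, by simp⟩
  have hcomplN : ∀ m : R, m ∉ P → m ∈ N := fun m hm => ⟨0, m, hm, by simp⟩
  have h0N : (0 : R) ∉ N := by
    rintro ⟨j, m, hm, hjm⟩
    apply hm
    have : m = 0 := pow_regular_left hregl j m hjm.symm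
    rw [this]
    exact hP.1.1.zero_mem
  -- the m-system property
  have hmsys : ∀ a ∈ N, ∀ b ∈ N, ∃ r : R, a * r * b ∈ N := by
    rintro _ ⟨j, m, hm, rfl⟩ _ ⟨i, m', hm', rfl⟩
    have h1 : ψ^[i] m ∉ P := fun hc => hm ((hψiterP i m).1 hc)
    obtain ⟨s, hs⟩ := hP.1.compl_msystem h1 hm'
    -- choose r with ψ^[i] r = s
    have hψibij : Function.Bijective (ψ^[i]) := Function.Bijective.iterate hψbij i
    obtain ⟨r, hr⟩ := hψibij.2 s
    refine ⟨r, j + i, ψ^[i] m * s * m', hs, ?_⟩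
    have hmul : ∀ (x y : R) (k : ℕ), ψ^[k] (x * y) = ψ^[k] x * ψ^[k] y := by
      intro x y k
      induction k with
      | zero => simp
      | succ k ih => rw [Function.iterate_succ_apply', ih, hψmul,
          Function.iterate_succ_apply', Function.iterate_succ_apply']
    calc u ^ j * m * r * (u ^ i * m')
        = u ^ j * ((m * r) * u ^ i) * m' := by noncomm_ring
      _ = u ^ j * (u ^ i * ψ^[i] (m * r)) * m' := by rw [normal_conj_pow hψ i (m * r)]
      _ = u ^ (j + i) * (ψ^[i] m * s * m') := by
          rw [hmul m r i, hr, pow_add]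
          noncomm_ring
  -- Zorn: a maximal ideal disjoint from N
  have hzorn := zorn_subset_nonempty {I : Set R | IsIdealSet I ∧ ∀ x ∈ I, x ∉ N} ?_ {0}
    ⟨⟨rfl, by rintro _ rfl _ rfl; simp, by rintro _ rfl; simp, by rintro _ rfl r; simp⟩,
      by rintro x rfl; exact h0N⟩
  · obtain ⟨M, -, hM⟩ := hzorn
    obtain ⟨hMid, hMN⟩ := hM.prop
    have hMprime : IsPrimeIdealSet M := by
      refine ⟨hMid, fun hu' => (hMN 1 (hu' ▸ Set.mem_univ 1)) h1N, ?_⟩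
      intro X Y hX hY hXY
      by_contra hcon
      push_neg at hcon
      obtain ⟨x, hxX, hxM⟩ := Set.not_subset.1 hcon.1
      obtain ⟨y, hyY, hyM⟩ := Set.not_subset.1 hcon.2
      have hXMid : IsIdealSet (addSet X M) := isIdealSet_addSet hX hMid
      have hYMid : IsIdealSet (addSet Y M) := isIdealSet_addSet hY hMid
      have hXmeet : ∃ n₁ ∈ addSet X M, n₁ ∈ N := by
        by_contra hc
        push_neg at hc
        have := hM.le_of_ge (y := addSet X M) ⟨hXMid, hc⟩ (fun m hm => right_mem_addSet hX hm)
        exact hxM (this (left_mem_addSet hMid hxX))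
      have hYmeet : ∃ n₂ ∈ addSet Y M, n₂ ∈ N := by
        by_contra hc
        push_neg at hc
        have := hM.le_of_ge (y := addSet Y M) ⟨hYMid, hc⟩ (fun m hm => right_mem_addSet hY hm)
        exact hyM (this (left_mem_addSet hMid hyY))
      obtain ⟨n₁, ⟨x₁, hx₁, m₁, hm₁, rfl⟩, hn₁⟩ := hXmeet
      obtain ⟨n₂, ⟨y₂, hy₂, m₂, hm₂, rfl⟩, hn₂⟩ := hYmeet
      obtain ⟨r, hr⟩ := hmsys _ hn₁ _ hn₂
      apply hMN _ ?_ hr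
      have hexp : (x₁ + m₁) * r * (y₂ + m₂)
          = x₁ * r * y₂ + (x₁ * r * m₂ + (m₁ * r * y₂ + m₁ * r * m₂)) := by noncomm_ring
      rw [hexp]
      refine hMid.add_mem (hXY _ (hX.mul_right hx₁ r) _ hy₂) ?_
      refine hMid.add_mem (hMid.mul_left hm₂ _) ?_
      exact hMid.add_mem (hMid.mul_right (hMid.mul_right hm₁ r) _)
        (hMid.mul_right (hMid.mul_right hm₁ r) _)
    -- M ⊆ P since the complement of P lies in N
    have hMP : M ⊆ P := by
      intro x hx
      by_contra hxP
      exact hMN x hx (hcomplN x hxP)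
    have := hP.2 M hMprime hMP
    exact hMN u (this ▸ huP) huN
  · intro c hcS hchain hcne
    obtain ⟨I₀, hI₀⟩ := hcne
    refine ⟨⋃₀ c, ⟨⟨⟨I₀, hI₀, (hcS hI₀).1.zero_mem⟩, ?_, ?_, ?_⟩, ?_⟩,
      fun s hs => Set.subset_sUnion_of_mem hs⟩
    · rintro a ⟨I, hI, haI⟩ b ⟨J, hJ, hbJ⟩
      rcases hchain.total hI hJ with h | h
      · exact ⟨J, hJ, (hcS hJ).1.add_mem (h haI) hbJ⟩
      · exact ⟨I, hI, (hcS hI).1.add_mem haI (h hbJ)⟩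
    · rintro a ⟨I, hI, haI⟩
      exact ⟨I, hI, (hcS hI).1.neg_mem haI⟩
    · rintro a ⟨I, hI, haI⟩ r
      exact ⟨⟨I, hI, (hcS hI).1.mul_left haI r⟩, ⟨I, hI, (hcS hI).1.mul_right haI r⟩⟩
    · rintro x ⟨I, hI, hxI⟩
      exact (hcS hI).2 x hxI

/-- KEY LEMMA: if a ring has finitely many minimal primes, then a regular normal
element lies in no minimal prime. -/
theorem regular_normal_not_mem_minimal_prime (hfin : (minPrimes R).Finite)
    {t : R} (hn : IsNormalElement t)
    (hregl : ∀ x : R, t * x = 0 → x = 0) (hregr : ∀ x : R, x * t = 0 → x = 0)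
    {P : Set R} (hP : IsMinimalPrimeIdealSet P) : t ∉ P := by
  intro htP
  obtain ⟨σ, hσbij, hσ⟩ := exists_normal_conj hn hregl hregr
  -- all iterated images of P are minimal primes
  have hiter : ∀ n : ℕ, IsMinimalPrimeIdealSet ((⇑σ)^[n] '' P) := by
    intro n
    induction n with
    | zero => simpa using hP
    | succ n ih =>
      have : (⇑σ)^[n + 1] '' P = σ '' ((⇑σ)^[n] '' P) := by
        rw [Set.image_image]
        ext x
        constructor
        · rintro ⟨y, hy, rfl⟩; exact ⟨y, hy, (Function.iterate_succ_apply' _ n y).symm⟩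
        · rintro ⟨y, hy, rfl⟩; exact ⟨y, hy, Function.iterate_succ_apply' _ n y⟩
      rw [this]
      exact image_minimal_prime_of_auto hσbij ih
  -- find a repetition
  have hmapsto : ∀ n : ℕ, (⇑σ)^[n] '' P ∈ minPrimes R := fun n => hiter n
  have hnotinj : ¬ Function.Injective (fun n : ℕ => (⇑σ)^[n] '' P) := by
    intro hinj
    exact (Set.infinite_of_injective_forall_mem hinj hmapsto) hfin
  simp only [Function.Injective, not_forall] at hnotinj
  obtain ⟨i, j, hij, hne⟩ := hnotinj
  -- wlog i < j
  wlog hlt : i < j generalizing i j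
  · exact this j i hij.symm (fun h => hne h.symm) (by omega)
  set d : ℕ := j - i with hd
  have hdpos : 0 < d := by omega
  have hdP : (⇑σ)^[d] '' P = P := by
    have hcomp : (⇑σ)^[i] '' ((⇑σ)^[d] '' P) = (⇑σ)^[i] '' P := by
      rw [Set.image_image]
      have : (fun x => (⇑σ)^[i] ((⇑σ)^[d] x)) = (⇑σ)^[j] := by
        funext x
        rw [← Function.iterate_add_apply, show i + d = j by omega]
      rw [this]
      exact hij.symm
    have hinj : Function.Injective ((⇑σ)^[i]) := Function.Injective.iterate hσbij.1 i
    exact Set.image_injective.2 hinj hcomp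
  -- apply the auxiliary lemma with u = t ^ d and ψ = σ^[d]
  have hregl' : ∀ x : R, t ^ d * x = 0 → x = 0 := pow_regular_left hregl d
  have huP : t ^ d ∈ P := by
    have hdd : t ^ d = t ^ (d - 1) * t := by
      rw [← pow_succ]
      congr 1
      omega
    rw [hdd]
    exact hP.1.1.mul_left htP _
  have hψmul : ∀ x y : R, (⇑σ)^[d] (x * y) = (⇑σ)^[d] x * (⇑σ)^[d] y := by
    intro x y
    induction d with
    | zero => simp
    | succ k ih => rw [Function.iterate_succ_apply', ih, map_mul,
        Function.iterate_succ_apply', Function.iterate_succ_apply']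
  have hψbij : Function.Bijective ((⇑σ)^[d]) := Function.Bijective.iterate hσbij d
  have hψP : ∀ a : R, (⇑σ)^[d] a ∈ P ↔ a ∈ P := by
    intro a
    constructor
    · intro h
      conv at h => rw [← hdP]
      obtain ⟨y, hy, heq⟩ := h
      rwa [← hψbij.1 heq]
    · intro h
      conv => rw [← hdP]
      exact ⟨a, h, rfl⟩
  exact aux_not_mem_minimal_prime hP huP hregl' ((⇑σ)^[d]) hψmul
    (normal_conj_pow hσ d) hψbij hψP

end Normal

/-! ### The localization layer -/

section Localization

variable {A : Type*} {Q : Type*} [Ring A] [Ring Q] {f : A →+* Q} {T : Set A}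

theorem IsLeftLocalization.injective (hloc : IsLeftLocalization T f)
    (hass : lAss T = ({0} : Set A)) : Function.Injective f := by
  intro x y hxy
  have : f (x - y) = 0 := by rw [map_sub, hxy, sub_self]
  have := (hloc.ker _).1 this
  rw [hass] at this
  have : x - y = 0 := this
  rwa [sub_eq_zero] at this

theorem T_reg_left (hloc : IsLeftLocalization T f) (hass : lAss T = ({0} : Set A))
    {t : A} (ht : t ∈ T) : ∀ x : A, t * x = 0 → x = 0 := by
  intro x hx
  have : x ∈ lAss T := ⟨t, ht, hx⟩
  rwa [hass] at this

theorem T_reg_right (hloc : IsLeftLocalization T f) (hass : lAss T = ({0} : Set A))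
    {t : A} (ht : t ∈ T) : ∀ x : A, x * t = 0 → x = 0 := by
  intro x hx
  have h1 : f x * f t = 0 := by rw [← map_mul, hx, map_zero]
  have h2 : f x = 0 := by
    have hu := hloc.isUnit t ht
    obtain ⟨u, hu⟩ := hu
    calc f x = f x * f t * ↑u⁻¹ := by rw [← hu, mul_assoc, u.mul_inv, mul_one]
    _ = 0 := by rw [h1, zero_mul]
  have := (hloc.ker _).1 h2
  rwa [hass, Set.mem_singleton_iff] at this

theorem unit_cancel (hloc : IsLeftLocalization T f) {t : A} (ht : t ∈ T) {x y : Q}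
    (h : f t * x = f t * y) : x = y :=
  (hloc.isUnit t ht).mul_left_cancel h

/-- Left/right saturation of primes avoiding a normal element. -/
theorem prime_sat_left {P : Set A} (hP : IsPrimeIdealSet P) {t : A}
    (hn : IsNormalElement t) (htP : t ∉ P) {a : A} (h : t * a ∈ P) : a ∈ P := by
  have : ∀ r : A, t * r * a ∈ P := by
    intro r
    obtain ⟨r', hr'⟩ := hn.2 r
    rw [hr', mul_assoc]
    exact hP.1.mul_left h r'
  rcases hP.elem_criterion this with h' | h'
  · exact absurd h' htP
  · exact h'

theorem prime_sat_right {P : Set A} (hP : IsPrimeIdealSet P) {t : A}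
    (hn : IsNormalElement t) (htP : t ∉ P) {a : A} (h : a * t ∈ P) : a ∈ P := by
  have : ∀ r : A, a * r * t ∈ P := by
    intro r
    obtain ⟨r', hr'⟩ := hn.1 r
    rw [mul_assoc, hr', ← mul_assoc]
    exact hP.1.mul_right h r'
  rcases hP.elem_criterion this with h' | h'
  · exact h'
  · exact absurd h' htP

/-- `T`-saturation (two-sided) of a subset. -/
def TSat (T : Set A) (I : Set A) : Prop :=
  ∀ t ∈ T, ∀ a : A, (t * a ∈ I → a ∈ I) ∧ (a * t ∈ I → a ∈ I)

theorem prime_TSat {P : Set A} (hP : IsPrimeIdealSet P)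
    (hTn : ∀ t ∈ T, IsNormalElement t) (hdisj : ∀ t ∈ T, t ∉ P) : TSat T P :=
  fun t ht a => ⟨fun h => prime_sat_left hP (hTn t ht) (hdisj t ht) h,
    fun h => prime_sat_right hP (hTn t ht) (hdisj t ht) h⟩

theorem locSet_isIdealSet (hT : IsMulSet T) (hTn : ∀ t ∈ T, IsNormalElement t)
    (hOre : LeftOre T) (hloc : IsLeftLocalization T f)
    {I : Set A} (hI : IsIdealSet I) (hsat : TSat T I) : IsIdealSet (locSet f T I) := by
  refine ⟨⟨1, hT.1, 0, hI.zero_mem, by simp⟩, ?_, ?_, ?_⟩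
  · rintro q₁ ⟨s₁, hs₁, a₁, ha₁, heq₁⟩ q₂ ⟨s₂, hs₂, a₂, ha₂, heq₂⟩
    obtain ⟨s', hs', r', hrel⟩ := hOre s₁ s₂ hs₂
    refine ⟨s' * s₁, hT.2.2 _ hs' _ hs₁,
      s' * a₁ + r' * a₂, hI.add_mem (hI.mul_left ha₁ s') (hI.mul_left ha₂ r'), ?_⟩
    have : f (s' * s₁) * (q₁ + q₂) = f s' * (f s₁ * q₁) + f r' * (f s₂ * q₂) := by
      rw [map_mul, mul_add]
      congr 1
      · rw [mul_assoc]
      · rw [← map_mul, hrel, map_mul, mul_assoc]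
    rw [this, heq₁, heq₂, ← map_mul, ← map_mul, ← map_add]
  · rintro q ⟨s, hs, a, ha, heq⟩
    exact ⟨s, hs, -a, hI.neg_mem ha, by rw [mul_neg, heq, map_neg]⟩
  · rintro q ⟨s₁, hs₁, a₁, ha₁, heq₁⟩ ρ
    constructor
    · -- ρ * q
      obtain ⟨s₀, hs₀, r₀, heq₀⟩ := hloc.surj ρ
      obtain ⟨s₂, hs₂, r₂, hrel⟩ := hOre r₀ s₁ hs₁
      refine ⟨s₂ * s₀, hT.2.2 _ hs₂ _ hs₀, r₂ * a₁, hI.mul_left ha₁ r₂, ?_⟩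
      calc f (s₂ * s₀) * (ρ * q) = f s₂ * (f s₀ * ρ) * q := by rw [map_mul]; noncomm_ring
        _ = f (s₂ * r₀) * q := by rw [heq₀, map_mul, mul_assoc]
        _ = f r₂ * (f s₁ * q) := by rw [hrel, map_mul, mul_assoc]
        _ = f (r₂ * a₁) := by rw [heq₁, map_mul]
    · -- q * ρ
      obtain ⟨s₀, hs₀, r₀, heq₀⟩ := hloc.surj ρ
      obtain ⟨c, hc⟩ := (hTn s₀ hs₀).2 a₁
      have hcI : c ∈ I := (hsat s₀ hs₀ c).2 (by rw [← hc]; exact hI.mul_left ha₁ s₀)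
      refine ⟨s₀ * s₁, hT.2.2 _ hs₀ _ hs₁, c * r₀, hI.mul_right hcI r₀, ?_⟩
      calc f (s₀ * s₁) * (q * ρ) = f s₀ * (f s₁ * q) * ρ := by rw [map_mul]; noncomm_ring
        _ = f (s₀ * a₁) * ρ := by rw [heq₁, map_mul, mul_assoc]
        _ = f c * (f s₀ * ρ) := by rw [hc, map_mul, mul_assoc]
        _ = f (c * r₀) := by rw [heq₀, ← map_mul]

theorem mem_locSet_iff (hT : IsMulSet T) (hloc : IsLeftLocalization T f)
    (hass : lAss T = ({0} : Set A)) {I : Set A} (hI : IsIdealSet I) (hsat : TSat T I)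
    {a : A} : f a ∈ locSet f T I ↔ a ∈ I := by
  constructor
  · rintro ⟨s, hs, b, hb, heq⟩
    rw [← map_mul] at heq
    have : s * a = b := hloc.injective hass heq
    exact (hsat s hs a).1 (this ▸ hb)
  · intro ha
    exact ⟨1, hT.1, a, ha, by simp⟩

theorem preimage_locSet (hT : IsMulSet T) (hloc : IsLeftLocalization T f)
    (hass : lAss T = ({0} : Set A)) {I : Set A} (hI : IsIdealSet I) (hsat : TSat T I) :
    f ⁻¹' (locSet f T I) = I := by
  ext a
  exact mem_locSet_iff hT hloc hass hI hsat

theorem locSet_prime (hT : IsMulSet T) (hTn : ∀ t ∈ T, IsNormalElement t)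
    (hOre : LeftOre T) (hloc : IsLeftLocalization T f) (hass : lAss T = ({0} : Set A))
    {P : Set A} (hP : IsPrimeIdealSet P) (hdisj : ∀ t ∈ T, t ∉ P) :
    IsPrimeIdealSet (locSet f T P) := by
  have hsat : TSat T P := prime_TSat hP hTn hdisj
  refine ⟨locSet_isIdealSet hT hTn hOre hloc hP.1 hsat, ?_, ?_⟩
  · intro huniv
    have h1 : (1 : Q) ∈ locSet f T P := huniv ▸ Set.mem_univ 1
    obtain ⟨s, hs, a, ha, heq⟩ := h1
    rw [mul_one] at heq
    have : s = a := hloc.injective hass heq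
    exact hdisj s hs (this ▸ ha)
  · intro X Y hX hY hXY
    have hXc : IsIdealSet (f ⁻¹' X) := preimage_ideal f hX
    have hYc : IsIdealSet (f ⁻¹' Y) := preimage_ideal f hY
    have hXYc : ∀ a ∈ f ⁻¹' X, ∀ b ∈ f ⁻¹' Y, a * b ∈ P := by
      intro a ha b hb
      have : f (a * b) ∈ locSet f T P := by
        rw [map_mul]
        exact hXY _ ha _ hb
      exact (mem_locSet_iff hT hloc hass hP.1 hsat).1 this
    rcases hP.2.2 _ _ hXc hYc hXYc with h | h
    · refine Or.inl ?_
      intro q hq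
      obtain ⟨s, hs, r, heq⟩ := hloc.surj q
      have : f r ∈ X := heq ▸ hX.mul_left hq (f s)
      exact ⟨s, hs, r, h this, heq⟩
    · refine Or.inr ?_
      intro q hq
      obtain ⟨s, hs, r, heq⟩ := hloc.surj q
      have : f r ∈ Y := heq ▸ hY.mul_left hq (f s)
      exact ⟨s, hs, r, h this, heq⟩

/-- If all minimal primes of `A` avoid `T`, the prime radical of `Q` is contained in
the localization of the prime radical of `A`. -/
theorem radical_subset_locSet (hT : IsMulSet T) (hTn : ∀ t ∈ T, IsNormalElement t)
    (hOre : LeftOre T) (hloc : IsLeftLocalization T f) (hass : lAss T = ({0} : Set A))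
    (hdisj : ∀ P : Set A, IsMinimalPrimeIdealSet P → ∀ t ∈ T, t ∉ P) :
    primeRadicalSet Q ⊆ locSet f T (primeRadicalSet A) := by
  intro q hq
  obtain ⟨s, hs, r, heq⟩ := hloc.surj q
  refine ⟨s, hs, r, ?_, heq⟩
  intro p hp
  obtain ⟨P, hPmin, hPsub⟩ := exists_minimal_prime_le hp
  apply hPsub
  have hprime := locSet_prime hT hTn hOre hloc hass hPmin.1 (hdisj P hPmin)
  have hqP : q ∈ locSet f T P := hq _ hprime
  have : f r ∈ locSet f T P := heq ▸ hprime.1.mul_left hqP (f s)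
  exact (mem_locSet_iff hT hloc hass hPmin.1.1
    (prime_TSat hPmin.1 hTn (hdisj P hPmin))).1 this

/-- If moreover the prime radical of `A` is zero, an element of `Q` lying in the
localization of every minimal prime is zero. -/
theorem eq_zero_of_mem_all_locSet (hT : IsMulSet T) (hTn : ∀ t ∈ T, IsNormalElement t)
    (hOre : LeftOre T) (hloc : IsLeftLocalization T f) (hass : lAss T = ({0} : Set A))
    (hdisj : ∀ P : Set A, IsMinimalPrimeIdealSet P → ∀ t ∈ T, t ∉ P)
    (hrad : primeRadicalSet A = ({0} : Set A)) {q : Q}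
    (hq : ∀ P : Set A, IsMinimalPrimeIdealSet P → q ∈ locSet f T P) : q = 0 := by
  obtain ⟨s, hs, r, heq⟩ := hloc.surj q
  have hr : r ∈ primeRadicalSet A := by
    intro p hp
    obtain ⟨P, hPmin, hPsub⟩ := exists_minimal_prime_le hp
    apply hPsub
    have hprime := locSet_prime hT hTn hOre hloc hass hPmin.1 (hdisj P hPmin)
    have : f r ∈ locSet f T P := heq ▸ hprime.1.mul_left (hq P hPmin) (f s)
    exact (mem_locSet_iff hT hloc hass hPmin.1.1
      (prime_TSat hPmin.1 hTn (hdisj P hPmin))).1 this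
  rw [hrad, Set.mem_singleton_iff] at hr
  apply unit_cancel hloc hs
  rw [heq, hr, map_zero, mul_zero]

end Localization

/-! ### The induced homomorphism between localizations -/

section Phi

variable {A : Type*} {Q : Type*} {B : Type*} {Q' : Type*}
  [Ring A] [Ring Q] [Ring B] [Ring Q']

theorem unit_cancel_left {M : Type*} [Monoid M] {x : M} (hx : IsUnit x) (y : M) :
    x * (↑hx.unit⁻¹ * y) = y := by
  rw [← mul_assoc, IsUnit.mul_val_inv, one_mul]

theorem exists_phi (f : A →+* Q) (T : Set A) (h : A →+* B) (f' : B →+* Q')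
    (hT : IsMulSet T) (hOre : LeftOre T)
    (hloc : IsLeftLocalization T f) (hass : lAss T = ({0} : Set A))
    (hh : Function.Surjective h) (hloc' : IsLeftLocalization (h '' T) f') :
    ∃ φ : Q →+* Q', (∀ a : A, φ (f a) = f' (h a)) ∧ Function.Surjective φ ∧
      ∀ (q : Q) (s a : A), s ∈ T → f s * q = f a → f' (h s) * φ q = f' (h a) := by
  classical
  have hu : ∀ s ∈ T, IsUnit (f' (h s)) := fun s hs => hloc'.isUnit _ ⟨s, hs, rfl⟩
  have cancel' : ∀ s ∈ T, ∀ x y : Q', f' (h s) * x = f' (h s) * y → x = y :=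
    fun s hs x y hxy => (hu s hs).mul_left_cancel hxy
  have hsel : ∀ q : Q, ∃ p : A × A, p.1 ∈ T ∧ f p.1 * q = f p.2 := by
    intro q
    obtain ⟨s, hs, r, heq⟩ := hloc.surj q
    exact ⟨(s, r), hs, heq⟩
  set sel : Q → A × A := fun q => Classical.choose (hsel q) with hseldef
  have hsel1 : ∀ q : Q, (sel q).1 ∈ T := fun q => (Classical.choose_spec (hsel q)).1
  have hsel2 : ∀ q : Q, f (sel q).1 * q = f (sel q).2 :=
    fun q => (Classical.choose_spec (hsel q)).2
  set φ0 : Q → Q' := fun q => ↑(hu _ (hsel1 q)).unit⁻¹ * f' (h (sel q).2) with hφ0def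
  -- well-definedness
  have hwd : ∀ (q : Q) (s a : A) (hs : s ∈ T), f s * q = f a →
      φ0 q = ↑(hu s hs).unit⁻¹ * f' (h a) := by
    intro q s a hs heq
    obtain ⟨u, hut, r, hrel⟩ := hOre (sel q).1 s hs
    have key : u * (sel q).2 = r * a := by
      apply hloc.injective hass
      have h1 : f (u * (sel q).1) * q = f (u * (sel q).2) := by
        rw [map_mul, mul_assoc, hsel2 q, ← map_mul]
      have h2 : f (u * (sel q).1) * q = f (r * a) := by
        rw [hrel, map_mul, mul_assoc, heq, ← map_mul]
      rw [← h1, h2]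
    apply cancel' (u * (sel q).1) (hT.2.2 _ hut _ (hsel1 q))
    have e1 : f' (h (u * (sel q).1)) * φ0 q = f' (h (u * (sel q).2)) := by
      show f' (h (u * (sel q).1)) * (↑(hu _ (hsel1 q)).unit⁻¹ * f' (h (sel q).2)) = _
      rw [map_mul h, map_mul (f' : B →+* Q'), mul_assoc,
        unit_cancel_left (hu _ (hsel1 q)), ← map_mul (f' : B →+* Q'), ← map_mul h]
    have e2 : f' (h (u * (sel q).1)) * (↑(hu s hs).unit⁻¹ * f' (h a))
        = f' (h (u * (sel q).2)) := by
      rw [hrel, map_mul h, map_mul (f' : B →+* Q'), mul_assoc,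
        unit_cancel_left (hu s hs), ← map_mul (f' : B →+* Q'), ← map_mul h, key]
    rw [e1, e2]
  -- the multiplied form of well-definedness
  have hspec : ∀ (q : Q) (s a : A), s ∈ T → f s * q = f a → f' (h s) * φ0 q = f' (h a) := by
    intro q s a hs heq
    rw [hwd q s a hs heq, unit_cancel_left (hu s hs)]
  -- ring hom properties
  have hone : φ0 1 = 1 := by
    apply cancel' 1 hT.1
    rw [mul_one]
    have := hspec 1 1 1 hT.1 (by simp)
    simpa using this
  have hadd : ∀ q₁ q₂ : Q, φ0 (q₁ + q₂) = φ0 q₁ + φ0 q₂ := by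
    intro q₁ q₂
    obtain ⟨u, hut, r, hrel⟩ := hOre (sel q₁).1 (sel q₂).1 (hsel1 q₂)
    have hwT : u * (sel q₁).1 ∈ T := hT.2.2 _ hut _ (hsel1 q₁)
    have hq1 : f (u * (sel q₁).1) * q₁ = f (u * (sel q₁).2) := by
      rw [map_mul, mul_assoc, hsel2 q₁, ← map_mul]
    have hq2 : f (u * (sel q₁).1) * q₂ = f (r * (sel q₂).2) := by
      rw [hrel, map_mul, mul_assoc, hsel2 q₂, ← map_mul]
    have hsum : f (u * (sel q₁).1) * (q₁ + q₂)
        = f (u * (sel q₁).2 + r * (sel q₂).2) := by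
      rw [mul_add, hq1, hq2, ← map_add]
    apply cancel' _ hwT
    rw [hspec _ _ _ hwT hsum, mul_add, hspec _ _ _ hwT hq1, hspec _ _ _ hwT hq2, ← map_add,
      ← map_add]
  have hmul : ∀ q₁ q₂ : Q, φ0 (q₁ * q₂) = φ0 q₁ * φ0 q₂ := by
    intro q₁ q₂
    obtain ⟨u, hut, r, hrel⟩ := hOre (sel q₁).2 (sel q₂).1 (hsel1 q₂)
    have hwT : u * (sel q₁).1 ∈ T := hT.2.2 _ hut _ (hsel1 q₁)
    have hprod : f (u * (sel q₁).1) * (q₁ * q₂) = f (r * (sel q₂).2) := by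
      rw [map_mul, mul_assoc, ← mul_assoc (f (sel q₁).1), hsel2 q₁]
      rw [← mul_assoc, ← map_mul, hrel, map_mul, mul_assoc, hsel2 q₂, ← map_mul]
    apply cancel' _ hwT
    rw [hspec _ _ _ hwT hprod]
    have : f' (h (u * (sel q₁).1)) * (φ0 q₁ * φ0 q₂)
        = f' (h u) * (f' (h (sel q₁).1) * φ0 q₁) * φ0 q₂ := by
      rw [map_mul, map_mul]; noncomm_ring
    rw [this, hspec q₁ _ _ (hsel1 q₁) (hsel2 q₁)]
    calc f' (h (r * (sel q₂).2))
        = f' (h r) * f' (h (sel q₂).2) := by rw [map_mul h, map_mul]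
      _ = f' (h r) * (f' (h (sel q₂).1) * φ0 q₂) := by
          rw [hspec q₂ _ _ (hsel1 q₂) (hsel2 q₂)]
      _ = f' (h (r * (sel q₂).1)) * φ0 q₂ := by rw [map_mul h, map_mul, mul_assoc]
      _ = f' (h (u * (sel q₁).2)) * φ0 q₂ := by rw [← hrel]
      _ = f' (h u) * f' (h (sel q₁).2) * φ0 q₂ := by rw [map_mul h, map_mul]
  set φ : Q →+* Q' :=
    { toFun := φ0, map_one' := hone, map_mul' := hmul,
      map_zero' := by
        apply cancel' 1 hT.1
        rw [mul_zero]
        have := hspec 0 1 0 hT.1 (by simp)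
        simpa using this,
      map_add' := hadd } with hφdef
  have hcomm : ∀ a : A, φ (f a) = f' (h a) := by
    intro a
    show φ0 (f a) = f' (h a)
    have := hspec (f a) 1 a hT.1 (by simp)
    simpa using this
  refine ⟨φ, hcomm, ?_, fun q s a hs heq => hspec q s a hs heq⟩
  intro q'
  obtain ⟨t', ht', b, heq'⟩ := hloc'.surj q'
  obtain ⟨t, htT, rfl⟩ := ht'
  obtain ⟨a, rfl⟩ := hh b
  have hut := hloc.isUnit t htT
  refine ⟨↑hut.unit⁻¹ * f a, ?_⟩
  have hq : f t * (↑hut.unit⁻¹ * f a) = f a := unit_cancel_left hut (f a)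
  show φ0 (↑hut.unit⁻¹ * f a) = q'
  apply cancel' t htT
  rw [hspec _ _ _ htT hq, heq']
end Phi

/-! ### Global assembly helpers -/

section Assembly

variable {A : Type*} [Ring A]

theorem minimalPrimeOver_radical_iff {P : Set A} :
    IsMinimalPrimeOver (primeRadicalSet A) P ↔ IsMinimalPrimeIdealSet P := by
  constructor
  · rintro ⟨hp, -, hmin⟩
    exact ⟨hp, fun P' hP' hsub => hmin P' hP' (fun r hr => hr P' hP') hsub⟩
  · rintro ⟨hp, hmin⟩
    exact ⟨hp, fun r hr => hr P hp, fun P' hP' _ hsub => hmin P' hP' hsub⟩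

theorem minPrimes_eq_image {R : Type*} [Ring R] (g : R →+* A) (hg : Function.Surjective g)
    (K : Set R) (hgker : ∀ r : R, g r = 0 ↔ r ∈ K) :
    minPrimes A = (fun p => g '' p) '' {p : Set R | IsMinimalPrimeOver K p} := by
  ext P
  constructor
  · intro hP
    exact ⟨g ⁻¹' P, preimage_minimalPrimeOver g hg K hgker hP,
      Set.image_preimage_eq P hg⟩
  · rintro ⟨p, hp, rfl⟩
    exact image_minimalPrimeOver g hg K hgker hp

end Assembly

universe u v w

/-- Let `S` be a multiplicative set of `R` generated by normal
elements, `𝔞 = twoSidedAss S`, `π = g : R → R̄` the projection with kernel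
`𝔞`, `S̄ = g '' S` (a left and right denominator set of `R̄` with `ass = 0`)
and `f : R̄ → Q = S̄⁻¹R̄` the localization, with `min(𝔞)` finite.  Then:
(1) `𝔭 ↦ S̄⁻¹π(𝔭)` is an injection of `min(𝔞)` into `Spec(S̄⁻¹R̄)` and
`𝔫_{S̄⁻¹R̄} ⊆ S̄⁻¹𝔫_{R̄}`; (2) for `π̃ = h : R̄ → R̃ = R̄/𝔫_{R̄}` and
`S̃ = h '' S̄`: `S̃` is a left and right denominator set of `R̃` with
`ass = 0`, `S̄⁻¹R̄ / S̄⁻¹𝔫_{R̄} ≅ S̃⁻¹R̃`, and `𝔭 ↦ S̃⁻¹π̃(π(𝔭))` is a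
bijection of `min(𝔞)` onto `min(S̃⁻¹R̃)`. -/
theorem statement9 {R : Type*} [Ring R]
    {S : Set R} (hSmul : IsMulSet S) (hnormal : ∀ s ∈ S, IsNormalElement s)
    (hfin : {p : Set R | IsMinimalPrimeOver (twoSidedAss S) p}.Finite)
    (A : Type u) [Ring A] (g : R →+* A) (hg : Function.Surjective g)
    (hgker : ∀ r : R, g r = 0 ↔ r ∈ twoSidedAss S)
    (hden : IsLeftDenominatorSet (g '' S) ∧ IsRightDenominatorSet (g '' S) ∧
      lAss (g '' S) = ({0} : Set A))
    {Q : Type*} [Ring Q] (f : A →+* Q) (hf : IsLeftLocalization (g '' S) f) :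
    ((∀ p : Set R, IsMinimalPrimeOver (twoSidedAss S) p →
        IsPrimeIdealSet (locSet f (g '' S) (g '' p))) ∧
      Set.InjOn (fun p : Set R => locSet f (g '' S) (g '' p))
        {p : Set R | IsMinimalPrimeOver (twoSidedAss S) p} ∧
      primeRadicalSet Q ⊆ locSet f (g '' S) (primeRadicalSet A)) ∧
    ∀ (B : Type v) [Ring B],
      ∀ h : A →+* B, Function.Surjective h →
        (∀ a : A, h a = 0 ↔ a ∈ primeRadicalSet A) →
        (IsLeftDenominatorSet (h '' (g '' S)) ∧
          IsRightDenominatorSet (h '' (g '' S)) ∧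
          lAss (h '' (g '' S)) = ({0} : Set B)) ∧
        ∀ (Q' : Type w) [Ring Q'],
          ∀ f' : B →+* Q', IsLeftLocalization (h '' (g '' S)) f' →
            (∃ φ : Q →+* Q', Function.Surjective φ ∧
                (∀ q : Q, φ q = 0 ↔ q ∈ locSet f (g '' S) (primeRadicalSet A)) ∧
                ∀ a : A, φ (f a) = f' (h a)) ∧
            minPrimes Q' =
              (fun p : Set R => locSet f' (h '' (g '' S)) (h '' (g '' p))) ''
                {p : Set R | IsMinimalPrimeOver (twoSidedAss S) p} ∧
            Set.InjOn (fun p : Set R => locSet f' (h '' (g '' S)) (h '' (g '' p)))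
              {p : Set R | IsMinimalPrimeOver (twoSidedAss S) p} := by
  classical
  -- properties of `T = g '' S` in `A`
  have hT : IsMulSet (g '' S) := hden.1.1
  have hOreT : LeftOre (g '' S) := hden.1.2.1
  have hOreTR : RightOre (g '' S) := hden.2.1.2.1
  have hassT : lAss (g '' S) = ({0} : Set A) := hden.2.2
  have hTn : ∀ t ∈ g '' S, IsNormalElement t := by
    rintro _ ⟨s, hsS, rfl⟩
    exact isNormal_image g hg (hnormal s hsS)
  have hregl : ∀ t ∈ g '' S, ∀ x : A, t * x = 0 → x = 0 :=
    fun t ht => T_reg_left hf hassT ht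
  have hregr : ∀ t ∈ g '' S, ∀ x : A, x * t = 0 → x = 0 :=
    fun t ht => T_reg_right hf hassT ht
  -- minimal primes of A
  have minA_eq : minPrimes A = (fun p => g '' p) ''
      {p : Set R | IsMinimalPrimeOver (twoSidedAss S) p} :=
    minPrimes_eq_image g hg _ hgker
  have hfinA : (minPrimes A).Finite := by
    rw [minA_eq]; exact hfin.image _
  have hdisjA : ∀ P : Set A, IsMinimalPrimeIdealSet P → ∀ t ∈ g '' S, t ∉ P :=
    fun P hP t ht =>
      regular_normal_not_mem_minimal_prime hfinA (hTn t ht) (hregl t ht) (hregr t ht) hP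
  -- Part (1)
  have part1a : ∀ p : Set R, IsMinimalPrimeOver (twoSidedAss S) p →
      IsPrimeIdealSet (locSet f (g '' S) (g '' p)) := by
    intro p hp
    have hgp : IsMinimalPrimeIdealSet (g '' p) :=
      image_minimalPrimeOver g hg _ hgker hp
    exact locSet_prime hT hTn hOreT hf hassT hgp.1 (hdisjA _ hgp)
  have contract1 : ∀ p : Set R, IsMinimalPrimeOver (twoSidedAss S) p →
      f ⁻¹' (locSet f (g '' S) (g '' p)) = g '' p := by
    intro p hp
    have hgp : IsMinimalPrimeIdealSet (g '' p) :=
      image_minimalPrimeOver g hg _ hgker hp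
    exact preimage_locSet hT hf hassT hgp.1.1 (prime_TSat hgp.1 hTn (hdisjA _ hgp))
  have gcontract : ∀ p : Set R, IsMinimalPrimeOver (twoSidedAss S) p →
      g ⁻¹' (g '' p) = p := by
    intro p hp
    exact preimage_image_eq g hp.1.1 (fun r hr => hp.2.1 ((hgker r).1 hr))
  refine ⟨⟨part1a, ?_, ?_⟩, ?_⟩
  · -- InjOn for part (1)
    intro p₁ hp₁ p₂ hp₂ heq
    simp only at heq
    have h1 : g '' p₁ = g '' p₂ := by
      rw [← contract1 p₁ hp₁, ← contract1 p₂ hp₂, heq]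
    rw [← gcontract p₁ hp₁, ← gcontract p₂ hp₂, h1]
  · exact radical_subset_locSet hT hTn hOreT hf hassT hdisjA
  -- Part (2)
  intro B _ h hh hker
  -- normality and regularity of `h '' (g '' S)` in `B`
  have hT'n : ∀ t' ∈ h '' (g '' S), IsNormalElement t' := by
    rintro _ ⟨t, ht, rfl⟩
    exact isNormal_image h hh (hTn t ht)
  have memrad : ∀ {a : A}, a ∈ primeRadicalSet A → ∀ P : Set A, IsPrimeIdealSet P → a ∈ P :=
    fun ha P hP => ha P hP
  have hsatrad_l : ∀ t ∈ g '' S, ∀ a : A, t * a ∈ primeRadicalSet A →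
      a ∈ primeRadicalSet A := by
    intro t ht a hta p hp
    obtain ⟨P, hPmin, hPsub⟩ := exists_minimal_prime_le hp
    exact hPsub (prime_sat_left hPmin.1 (hTn t ht) (hdisjA P hPmin t ht) (hta P hPmin.1))
  have hsatrad_r : ∀ t ∈ g '' S, ∀ a : A, a * t ∈ primeRadicalSet A →
      a ∈ primeRadicalSet A := by
    intro t ht a hta p hp
    obtain ⟨P, hPmin, hPsub⟩ := exists_minimal_prime_le hp
    exact hPsub (prime_sat_right hPmin.1 (hTn t ht) (hdisjA P hPmin t ht) (hta P hPmin.1))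
  have hregl' : ∀ t' ∈ h '' (g '' S), ∀ b : B, t' * b = 0 → b = 0 := by
    rintro _ ⟨t, ht, rfl⟩ b htb
    obtain ⟨a, rfl⟩ := hh b
    rw [← map_mul] at htb
    exact (hker a).2 (hsatrad_l t ht a ((hker _).1 htb))
  have hregr' : ∀ t' ∈ h '' (g '' S), ∀ b : B, b * t' = 0 → b = 0 := by
    rintro _ ⟨t, ht, rfl⟩ b htb
    obtain ⟨a, rfl⟩ := hh b
    rw [← map_mul] at htb
    exact (hker a).2 (hsatrad_r t ht a ((hker _).1 htb))
  -- A is nontrivial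
  have h01A : (0 : A) ≠ 1 := by
    intro h01
    have : g 1 = 0 := by rw [map_one, ← h01]
    obtain ⟨s, hs, t', ht', hst⟩ := (hgker 1).1 this
    rw [mul_one] at hst
    exact hSmul.2.1 (hst ▸ hSmul.2.2 s hs t' ht')
  have h1T' : (1 : B) ∈ h '' (g '' S) := ⟨1, hT.1, map_one h⟩
  have h0T' : (0 : B) ∉ h '' (g '' S) := by
    rintro ⟨t, ht, ht0⟩
    obtain ⟨P, hPmin⟩ := exists_minimal_prime h01A
    have htrad : t ∈ primeRadicalSet A := (hker t).1 ht0
    exact hdisjA P hPmin t ht (htrad P hPmin.1)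
  have hT' : IsMulSet (h '' (g '' S)) := by
    refine ⟨h1T', h0T', ?_⟩
    rintro _ ⟨t, ht, rfl⟩ _ ⟨t', ht', rfl⟩
    exact ⟨t * t', hT.2.2 t ht t' ht', map_mul h t t'⟩
  have hOre' : LeftOre (h '' (g '' S)) := by
    rintro b _ ⟨t, ht, rfl⟩
    obtain ⟨a, rfl⟩ := hh b
    obtain ⟨s', hs', r', hrel⟩ := hOreT a t ht
    exact ⟨h s', ⟨s', hs', rfl⟩, h r', by rw [← map_mul, hrel, map_mul]⟩
  have hOre'R : RightOre (h '' (g '' S)) := by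
    rintro b _ ⟨t, ht, rfl⟩
    obtain ⟨a, rfl⟩ := hh b
    obtain ⟨s', hs', r', hrel⟩ := hOreTR a t ht
    exact ⟨h s', ⟨s', hs', rfl⟩, h r', by rw [← map_mul, hrel, map_mul]⟩
  have hass' : lAss (h '' (g '' S)) = ({0} : Set B) := by
    ext b
    constructor
    · rintro ⟨t', ht', hb⟩
      exact hregl' t' ht' b hb
    · rintro rfl
      exact ⟨1, h1T', mul_zero 1⟩
  have hdenB : IsLeftDenominatorSet (h '' (g '' S)) ∧
      IsRightDenominatorSet (h '' (g '' S)) ∧ lAss (h '' (g '' S)) = ({0} : Set B) := by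
    refine ⟨⟨hT', hOre', ?_⟩, ⟨hT', hOre'R, ?_⟩, hass'⟩
    · intro r s hs hrs
      rw [hregr' s hs r hrs]
      exact ⟨1, h1T', mul_zero 1⟩
    · intro r s hs hrs
      rw [hregl' s hs r hrs]
      exact ⟨1, h1T', zero_mul 1⟩
  refine ⟨hdenB, ?_⟩
  intro Q' _ f' hf'
  -- prime radical of B is zero
  have hradB : primeRadicalSet B = ({0} : Set B) := by
    ext b
    constructor
    · intro hb
      obtain ⟨a, rfl⟩ := hh b
      have ha : a ∈ primeRadicalSet A := by
        intro p hp
        have hkerp : ∀ x : A, h x = 0 → x ∈ p := fun x hx => ((hker x).1 hx) p hp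
        have : h a ∈ h '' p := hb _ (image_prime h hh hp hkerp)
        rwa [← Set.mem_preimage, preimage_image_eq h hp.1 hkerp] at this
      rw [Set.mem_singleton_iff, (hker a).2 ha]
    · rintro rfl
      exact fun P hP => hP.1.zero_mem
  -- minimal primes of B
  have minB_eq : minPrimes B = (fun p : Set R => h '' (g '' p)) ''
      {p : Set R | IsMinimalPrimeOver (twoSidedAss S) p} := by
    have e1 : minPrimes B = (fun P => h '' P) ''
        {P : Set A | IsMinimalPrimeOver (primeRadicalSet A) P} :=
      minPrimes_eq_image h hh _ hker
    have e2 : {P : Set A | IsMinimalPrimeOver (primeRadicalSet A) P} = minPrimes A := by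
      ext P
      exact minimalPrimeOver_radical_iff
    rw [e1, e2, minA_eq, Set.image_image]
  have hfinB : (minPrimes B).Finite := by
    rw [minB_eq]; exact hfin.image _
  have hdisjB : ∀ P : Set B, IsMinimalPrimeIdealSet P → ∀ t ∈ h '' (g '' S), t ∉ P :=
    fun P hP t ht =>
      regular_normal_not_mem_minimal_prime hfinB (hT'n t ht)
        (hregl' t ht) (hregr' t ht) hP
  -- the morphism φ
  have hφ : ∃ φ : Q →+* Q', Function.Surjective φ ∧
      (∀ q : Q, φ q = 0 ↔ q ∈ locSet f (g '' S) (primeRadicalSet A)) ∧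
      ∀ a : A, φ (f a) = f' (h a) := by
    obtain ⟨φ, hcomm, hsurj, hspec⟩ := exists_phi f (g '' S) h f' hT hOreT hf hassT hh hf'
    refine ⟨φ, hsurj, ?_, hcomm⟩
    intro q
    constructor
    · intro hq0
      obtain ⟨s, hs, a, heq⟩ := hf.surj q
      have := hspec q s a hs heq
      rw [hq0, mul_zero] at this
      have ha0 : h a ∈ lAss (h '' (g '' S)) := (hf'.ker (h a)).1 this.symm
      rw [hass', Set.mem_singleton_iff] at ha0
      exact ⟨s, hs, a, (hker a).1 ha0, heq⟩
    · rintro ⟨s, hs, a, haRad, heq⟩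
      have hspec' := hspec q s a hs heq
      rw [(hker a).2 haRad, map_zero] at hspec'
      have : f' (h s) * φ q = f' (h s) * 0 := by rw [mul_zero, hspec']
      exact (hf'.isUnit (h s) ⟨s, hs, rfl⟩).mul_left_cancel this
  -- the minimal primes of Q'
  set L0 : List (Set B) := hfinB.toFinset.toList with hL0def
  have hL0mem : ∀ P : Set B, P ∈ L0 ↔ IsMinimalPrimeIdealSet P := by
    intro P
    rw [hL0def, Finset.mem_toList, Set.Finite.mem_toFinset]
    exact Iff.rfl
  have locIdeal : ∀ P : Set B, IsMinimalPrimeIdealSet P →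
      IsIdealSet (locSet f' (h '' (g '' S)) P) := by
    intro P hP
    exact locSet_isIdealSet hT' hT'n hOre' hf' hP.1.1 (prime_TSat hP.1 hT'n (hdisjB P hP))
  have locPrime : ∀ P : Set B, IsMinimalPrimeIdealSet P →
      IsPrimeIdealSet (locSet f' (h '' (g '' S)) P) := by
    intro P hP
    exact locSet_prime hT' hT'n hOre' hf' hass' hP.1 (hdisjB P hP)
  have locContract : ∀ P : Set B, IsMinimalPrimeIdealSet P →
      f' ⁻¹' (locSet f' (h '' (g '' S)) P) = P := by
    intro P hP
    exact preimage_locSet hT' hf' hass' hP.1.1 (prime_TSat hP.1 hT'n (hdisjB P hP))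
  have claim_contains : ∀ J' : Set Q', IsPrimeIdealSet J' →
      ∃ P : Set B, IsMinimalPrimeIdealSet P ∧ locSet f' (h '' (g '' S)) P ⊆ J' := by
    intro J' hJ'
    have habs := prime_absorb_list hJ' (L0.map fun P => locSet f' (h '' (g '' S)) P) ?_ ?_
    · obtain ⟨I, hIL, hIJ⟩ := habs
      rw [List.mem_map] at hIL
      obtain ⟨P, hPL, rfl⟩ := hIL
      exact ⟨P, (hL0mem P).1 hPL, hIJ⟩
    · rintro I hI
      rw [List.mem_map] at hI
      obtain ⟨P, hPL, rfl⟩ := hI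
      exact locIdeal P ((hL0mem P).1 hPL)
    · intro x hx
      have hprod0 : x.prod = 0 := by
        apply eq_zero_of_mem_all_locSet hT' hT'n hOre' hf' hass' hdisjB hradB
        intro P hP
        have hPL : locSet f' (h '' (g '' S)) P ∈
            L0.map fun P => locSet f' (h '' (g '' S)) P :=
          List.mem_map_of_mem ((hL0mem P).2 hP)
        obtain ⟨a, hax, haP⟩ := forall₂_exists_mem hx _ hPL
        exact list_prod_mem_ideal (locIdeal P hP) x ⟨a, hax, haP⟩
      rw [hprod0]
      exact hJ'.1.zero_mem
  have locMinPrime : ∀ P : Set B, IsMinimalPrimeIdealSet P →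
      IsMinimalPrimeIdealSet (locSet f' (h '' (g '' S)) P) := by
    intro P hP
    refine ⟨locPrime P hP, ?_⟩
    intro J'' hJ'' hsub
    obtain ⟨P₂, hP₂, hsub₂⟩ := claim_contains J'' hJ''
    have hP₂P : P₂ ⊆ P := by
      rw [← locContract P₂ hP₂, ← locContract P hP]
      exact Set.preimage_mono (hsub₂.trans hsub)
    have : P₂ = P := hP.2 P₂ hP₂.1 hP₂P
    exact Set.Subset.antisymm hsub (this ▸ hsub₂)
  have himgMin : ∀ p : Set R, IsMinimalPrimeOver (twoSidedAss S) p →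
      IsMinimalPrimeIdealSet (h '' (g '' p)) := by
    intro p hp
    have hgp : IsMinimalPrimeIdealSet (g '' p) :=
      image_minimalPrimeOver g hg _ hgker hp
    exact image_minimalPrimeOver h hh _ hker (minimalPrimeOver_radical_iff.2 hgp)
  refine ⟨hφ, ?_, ?_⟩
  · -- the bijection onto minPrimes Q'
    ext J'
    constructor
    · intro hJ'
      obtain ⟨P, hPmin, hsub⟩ := claim_contains J' hJ'.1
      have heq : J' = locSet f' (h '' (g '' S)) P :=
        (hJ'.2 _ (locPrime P hPmin) hsub).symm
      have : P ∈ minPrimes B := hPmin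
      rw [minB_eq] at this
      obtain ⟨p, hp, hPeq⟩ := this
      have hPeq' : h '' (g '' p) = P := hPeq
      refine ⟨p, hp, ?_⟩
      show locSet f' (h '' (g '' S)) (h '' (g '' p)) = J'
      rw [heq, hPeq']
    · rintro ⟨p, hp, rfl⟩
      exact locMinPrime _ (himgMin p hp)
  · -- injectivity for part (2)
    intro p₁ hp₁ p₂ hp₂ heq
    simp only at heq
    have h1 : h '' (g '' p₁) = h '' (g '' p₂) := by
      rw [← locContract _ (himgMin p₁ hp₁), ← locContract _ (himgMin p₂ hp₂), heq]
    have hgp₁ : IsMinimalPrimeIdealSet (g '' p₁) := image_minimalPrimeOver g hg _ hgker hp₁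
    have hgp₂ : IsMinimalPrimeIdealSet (g '' p₂) := image_minimalPrimeOver g hg _ hgker hp₂
    have hker₁ : ∀ x : A, h x = 0 → x ∈ g '' p₁ :=
      fun x hx => ((hker x).1 hx) _ hgp₁.1
    have hker₂ : ∀ x : A, h x = 0 → x ∈ g '' p₂ :=
      fun x hx => ((hker x).1 hx) _ hgp₂.1
    have h2 : g '' p₁ = g '' p₂ := by
      rw [← preimage_image_eq h hgp₁.1.1 hker₁, ← preimage_image_eq h hgp₂.1.1 hker₂, h1]
    rw [← gcontract p₁ hp₁, ← gcontract p₂ hp₂, h2]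

end BavulaMinPrimes
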